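/- For every natural number r, if s ∈ ℕ^{3^{r+1}} is a componentwise nonnegative integer vector whose component sum satisfies ∑s < (3^{r+1}−1)/2, then s is the unique componentwise nonnegative integer solution x of the equation M_r · x = M_r · s; in particular any two nonnegative integer solutions with the same image under M_r and sum below (3^{r+1}−1)/2 are equal. -/

import Mathlib

/-- Entries of the 2×3 matrix `M₀` with rows (1,0,1) and (0,1,1), as a function on ℕ. -/
def M0nat : ℕ → ℕ → ℤ
  | 0, 0 => 1
  | 0, 1 => 0
  | 0, 2 => 1
  | 1, 0 => 0
  | 1, 1 => 1
  | 1, 2 => 1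
  | _, _ => 0

/-- Entries of the matrix `M_r` (with `3^(r+1) - 1` rows and `3^(r+1)` columns):
`M_0` is as above, and `M_{r+1}` is the vertical stack of `M_r ⊗ (1,1,1)`
(first `3^(r+1) - 1` rows) and `I_{3^(r+1)} ⊗ M_0` (remaining `2·3^(r+1)` rows).
In the Kronecker product, row/column pairs are ordered lexicographically, i.e.
`(A ⊗ B) (p·i + s) (q·j + t) = A i j * B s t` for `B` of size `p × q`. -/
def Mnat : ℕ → ℕ → ℕ → ℤ
  | 0, i, j => M0nat i j
  | r + 1, i, j =>
    if i < 3 ^ (r + 1) - 1 then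
      -- block `M_r ⊗ (1,1,1)`
      Mnat r i (j / 3)
    else
      -- block `I_{3^(r+1)} ⊗ M_0`
      if (i - (3 ^ (r + 1) - 1)) / 2 = j / 3 then
        M0nat ((i - (3 ^ (r + 1) - 1)) % 2) (j % 3)
      else 0

/-- The matrix `M_r`. -/
def Mmat (r : ℕ) : Matrix (Fin (3 ^ (r + 1) - 1)) (Fin (3 ^ (r + 1))) ℤ :=
  Matrix.of fun i j => Mnat r i.val j.val

/-- Components of the vector `k_r` of length `3^(r+1)`:
`k_0 = (1,1,-1)` and `k_{r+1} = (k_r, k_r, -k_r)`. -/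
def knat : ℕ → ℕ → ℤ
  | 0, j => if j = 2 then -1 else 1
  | r + 1, j => if j < 2 * 3 ^ (r + 1) then knat r (j % 3 ^ (r + 1)) else -knat r (j % 3 ^ (r + 1))

/-- The vector `k_r`. -/
def kvec (r : ℕ) : Fin (3 ^ (r + 1)) → ℤ := fun j => knat r j.val

lemma sum_range_three_mul (N : ℕ) (f : ℕ → ℤ) :
    ∑ j ∈ Finset.range (3 * N), f j
      = ∑ b ∈ Finset.range N, (f (3*b) + f (3*b+1) + f (3*b+2)) := by
  induction N with
  | zero => simp
  | succ n ih =>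
    rw [Finset.sum_range_succ, ← ih, show 3*(n+1) = 3*n+1+1+1 by ring,
      Finset.sum_range_succ, Finset.sum_range_succ, Finset.sum_range_succ]
    ring_nf

lemma knat_succ (r : ℕ) : ∀ b < 3^(r+1), ∀ j' < 3,
    knat (r+1) (3*b + j') = knat 0 j' * knat r b := by
  induction r with
  | zero =>
    intro b hb j' hj
    interval_cases b <;> interval_cases j' <;> decide
  | succ r ih =>
    intro b hb j' hj
    have hN : 0 < 3^(r+1) := Nat.pow_pos (by norm_num)
    set N := 3^(r+1) with hNdef
    have hc : b % N < N := Nat.mod_lt _ hN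
    have hdigit : (3*b + j') % 3^(r+2) = 3 * (b % N) + j' := by
      have h3 : (3:ℕ)^(r+2) = 3 * N := by rw [hNdef]; ring
      have hb2 : b = N * (b / N) + b % N := (Nat.div_add_mod b N).symm
      have : 3*b + j' = 3 * (b % N) + j' + (b / N) * (3*N) := by
        nth_rewrite 1 [hb2]; ring
      rw [h3, this, Nat.add_mul_mod_self_right]
      exact Nat.mod_eq_of_lt (by omega)
    have hlt : (3*b + j' < 2 * 3^(r+2)) ↔ (b < 2 * N) := by
      have h3 : (3:ℕ)^(r+2) = 3 * N := by rw [hNdef]; ring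
      omega
    have hIH := ih (b % N) hc j' hj
    rcases Nat.lt_or_ge b (2*N) with h | h
    · rw [show knat (r+2) (3*b+j') = knat (r+1) ((3*b+j') % 3^(r+2)) from
        by rw [knat]; rw [if_pos (hlt.mpr h)],
        hdigit, hIH,
        show knat (r+1) b = knat r (b % N) from by rw [knat]; rw [if_pos h]]
    · rw [show knat (r+2) (3*b+j') = -knat (r+1) ((3*b+j') % 3^(r+2)) from
        by rw [knat]; rw [if_neg (by omega)],
        hdigit, hIH,
        show knat (r+1) b = -knat r (b % N) from by rw [knat]; rw [if_neg (by omega)]]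
      ring

lemma knat_cases (r : ℕ) (j : ℕ) : knat r j = 1 ∨ knat r j = -1 := by
  induction r generalizing j with
  | zero => rw [knat]; split <;> simp
  | succ r ih =>
    rw [knat]
    rcases ih (j % 3^(r+1)) with h | h <;> split <;> simp [h]

lemma sum_knat (r : ℕ) : ∑ j ∈ Finset.range (3^(r+1)), knat r j = 1 := by
  induction r with
  | zero => decide
  | succ r ih =>
    have hN : 0 < 3^(r+1) := Nat.pow_pos (by norm_num)
    set N := 3^(r+1) with hNdef
    have h3 : (3:ℕ)^(r+2) = N + (N + N) := by rw [hNdef]; ring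
    rw [h3, Finset.sum_range_add, Finset.sum_range_add]
    have e1 : ∀ i ∈ Finset.range N, knat (r+1) i = knat r i := by
      intro i hi
      simp only [Finset.mem_range] at hi
      rw [knat, if_pos (by omega), Nat.mod_eq_of_lt hi]
    have e2 : ∀ i ∈ Finset.range N, knat (r+1) (N + i) = knat r i := by
      intro i hi
      simp only [Finset.mem_range] at hi
      rw [knat, if_pos (by omega), Nat.add_mod_left, Nat.mod_eq_of_lt hi]
    have e3 : ∀ i ∈ Finset.range N, knat (r+1) (N + (N + i)) = -knat r i := by
      intro i hi
      simp only [Finset.mem_range] at hi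
      rw [knat, if_neg (by omega), show N + (N+i) = i + 2*N by ring,
        Nat.add_mul_mod_self_right, Nat.mod_eq_of_lt hi]
    rw [Finset.sum_congr rfl e1, Finset.sum_congr rfl e2, Finset.sum_congr rfl e3]
    simp [ih]

lemma card_filter_knat (r : ℕ) :
    2 * ((Finset.range (3^(r+1))).filter (fun j => knat r j = -1)).card + 1 = 3^(r+1) ∧
    2 * ((Finset.range (3^(r+1))).filter (fun j => knat r j = 1)).card = 3^(r+1) + 1 := by
  classical
  set N := 3^(r+1)
  set A := (Finset.range N).filter (fun j => knat r j = 1) with hA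
  set B := (Finset.range N).filter (fun j => knat r j = -1) with hB
  have hBeq : (Finset.range N).filter (fun a => ¬ knat r a = 1) = B := by
    apply Finset.filter_congr
    intro j hj
    rcases knat_cases r j with h | h <;> simp [h]
  have hcard : A.card + B.card = N := by
    have h := Finset.card_filter_add_card_filter_not
      (s := Finset.range N) (p := fun j => knat r j = 1)
    rw [Finset.card_range, hBeq] at h
    exact h
  have hsum : (A.card : ℤ) - B.card = 1 := by
    have := sum_knat r
    rw [← Finset.sum_filter_add_sum_filter_not (Finset.range N) (fun j => knat r j = 1)] at this
    have eA : ∑ j ∈ A, knat r j = (A.card : ℤ) := by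
      rw [Finset.sum_congr rfl (fun j hj => (Finset.mem_filter.mp hj).2)]
      simp
      rfl
    have eB : ∑ j ∈ (Finset.range N).filter (fun j => ¬ knat r j = 1), knat r j
        = -(B.card : ℤ) := by
      rw [hBeq, Finset.sum_congr rfl (fun j hj => (Finset.mem_filter.mp hj).2)]
      simp
      rfl
    rw [eA, eB] at this
    linarith
  constructor <;> omega

lemma Mnat_succ (r i j : ℕ) : Mnat (r+1) i j =
    if i < 3^(r+1) - 1 then Mnat r i (j/3)
    else (if (i - (3^(r+1)-1))/2 = j/3 then M0nat ((i-(3^(r+1)-1))%2) (j%3) else 0) := rfl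

lemma ker_knat : ∀ (r : ℕ) (v : ℕ → ℤ),
    (∀ i < 3^(r+1) - 1, ∑ j ∈ Finset.range (3^(r+1)), Mnat r i j * v j = 0) →
    ∃ t : ℤ, ∀ j < 3^(r+1), v j = t * knat r j := by
  intro r
  induction r with
  | zero =>
    intro v hv
    have h0 := hv 0 (by norm_num)
    have h1 := hv 1 (by norm_num)
    norm_num [Finset.sum_range_succ, Mnat, M0nat] at h0 h1
    refine ⟨v 0, ?_⟩
    intro j hj
    interval_cases j <;> simp [knat] <;> linarith
  | succ r ih =>
    intro v hv
    have hN : 0 < 3^(r+1) := Nat.pow_pos (by norm_num)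
    set N := 3^(r+1) with hNdef
    have h3 : (3:ℕ)^(r+1+1) = 3*N := by rw [hNdef]; ring
    -- second block relations
    have hblk : ∀ b < N, v (3*b) + v (3*b+2) = 0 ∧ v (3*b+1) + v (3*b+2) = 0 := by
      intro b hb
      have key : ∀ p < 2,
          M0nat p 0 * v (3*b) + M0nat p 1 * v (3*b+1) + M0nat p 2 * v (3*b+2) = 0 := by
        intro p hp
        have hi := hv (N - 1 + (2*b + p)) (by omega)
        rw [h3, sum_range_three_mul] at hi
        set i := N - 1 + (2*b + p) with hidef
        have hent : ∀ b' j', j' < 3 → Mnat (r+1) i (3*b'+j') =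
            if b = b' then M0nat p j' else 0 := by
          intro b' j' hj'
          rw [Mnat_succ, if_neg (by omega)]
          have e1 : (i - (3^(r+1)-1))/2 = b := by omega
          have e2 : (i - (3^(r+1)-1))%2 = p := by omega
          have e3 : (3*b'+j')/3 = b' := by omega
          have e4 : (3*b'+j')%3 = j' := by omega
          rw [e1, e2, e3, e4]
        have hterm : ∀ b' ∈ Finset.range N,
            (Mnat (r+1) i (3*b') * v (3*b') + Mnat (r+1) i (3*b'+1) * v (3*b'+1)
              + Mnat (r+1) i (3*b'+2) * v (3*b'+2))
            = if b' = b then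
                (M0nat p 0 * v (3*b) + M0nat p 1 * v (3*b+1) + M0nat p 2 * v (3*b+2))
              else 0 := by
          intro b' _
          have h0 : Mnat (r+1) i (3*b') = if b = b' then M0nat p 0 else 0 :=
            hent b' 0 (by norm_num)
          rw [h0, hent b' 1 (by norm_num), hent b' 2 (by norm_num)]
          by_cases h : b = b' <;> simp [h, eq_comm]
        rw [Finset.sum_congr rfl hterm, Finset.sum_ite_eq' (Finset.range N)] at hi
        rw [if_pos (Finset.mem_range.mpr hb)] at hi
        exact hi
      have k0 := key 0 (by norm_num)
      have k1 := key 1 (by norm_num)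
      simp only [M0nat] at k0 k1
      constructor <;> linarith
    -- first block
    have hfirst : ∀ i < N - 1,
        ∑ b ∈ Finset.range N, Mnat r i b * v (3*b) = 0 := by
      intro i hi
      have hfi := hv i (by omega)
      rw [h3, sum_range_three_mul] at hfi
      have hterm : ∀ b ∈ Finset.range N,
          (Mnat (r+1) i (3*b) * v (3*b) + Mnat (r+1) i (3*b+1) * v (3*b+1)
            + Mnat (r+1) i (3*b+2) * v (3*b+2))
          = Mnat r i b * v (3*b) := by
        intro b hb
        simp only [Finset.mem_range] at hb
        obtain ⟨e1, e2⟩ := hblk b hb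
        have d0 : (3*b)/3 = b := by omega
        have d1 : (3*b+1)/3 = b := by omega
        have d2 : (3*b+2)/3 = b := by omega
        rw [Mnat_succ, if_pos hi, d0, Mnat_succ, if_pos hi, d1,
          Mnat_succ, if_pos hi, d2]
        have g1 : v (3*b+1) = v (3*b) := by linarith
        have g2 : v (3*b+2) = -v (3*b) := by linarith
        rw [g1, g2]; ring
      rw [Finset.sum_congr rfl hterm] at hfi
      exact hfi
    obtain ⟨t, ht⟩ := ih (fun b => v (3*b)) hfirst
    refine ⟨t, ?_⟩
    intro j hj
    rw [h3] at hj
    have hb : j / 3 < N := by omega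
    have hdecomp : j = 3 * (j/3) + j % 3 := by omega
    obtain ⟨e1, e2⟩ := hblk (j/3) hb
    have hv0 := ht (j/3) hb
    have hjm : j % 3 = 0 ∨ j % 3 = 1 ∨ j % 3 = 2 := by omega
    rcases hjm with h | h | h
    · rw [hdecomp, h, knat_succ r (j/3) hb 0 (by norm_num)]
      simpa [knat] using hv0
    · rw [hdecomp, h, knat_succ r (j/3) hb 1 (by norm_num)]
      have : v (3*(j/3)+1) = v (3*(j/3)) := by linarith
      rw [this]
      simpa [knat] using hv0
    · rw [hdecomp, h, knat_succ r (j/3) hb 2 (by norm_num)]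
      have : v (3*(j/3)+2) = -v (3*(j/3)) := by linarith
      rw [this, hv0, show knat 0 2 = -1 from rfl]
      ring

open Matrix in
/-- If `s ∈ ℕ^(3^(r+1))` is a componentwise nonnegative integer vector with
`∑ s < (3^(r+1)-1)/2`, then `s` is the unique componentwise nonnegative integer solution
`x` of `M_r · x = M_r · s`: any nonnegative integer vector with the same image under
`M_r` equals `s`. -/
theorem unique_solution_of_small_sum (r : ℕ) (s : Fin (3 ^ (r + 1)) → ℕ)
    (hs : ∑ j, s j < (3 ^ (r + 1) - 1) / 2)
    (x : Fin (3 ^ (r + 1)) → ℕ)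
    (hx : Mmat r *ᵥ (fun j => (x j : ℤ)) = Mmat r *ᵥ (fun j => (s j : ℤ))) :
    x = s := by
  classical
  have hN : 0 < 3^(r+1) := Nat.pow_pos (by norm_num)
  set v : ℕ → ℤ := fun j => if h : j < 3^(r+1) then (x ⟨j,h⟩ : ℤ) - (s ⟨j,h⟩ : ℤ) else 0
    with hvdef
  have hv : ∀ i < 3^(r+1) - 1, ∑ j ∈ Finset.range (3^(r+1)), Mnat r i j * v j = 0 := by
    intro i hi
    have hfx := congrFun hx ⟨i, hi⟩
    simp only [Matrix.mulVec, dotProduct, Mmat, Matrix.of_apply] at hfx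
    rw [← Fin.sum_univ_eq_sum_range (fun n => Mnat r i n * v n)]
    have e : ∀ j : Fin (3^(r+1)), Mnat r i j.val * v j.val
        = Mnat r i j.val * (x j : ℤ) - Mnat r i j.val * (s j : ℤ) := by
      intro j
      simp only [hvdef, dif_pos j.isLt, Fin.eta]
      ring
    rw [Finset.sum_congr rfl (fun j _ => e j), Finset.sum_sub_distrib]
    rw [sub_eq_zero]
    exact hfx
  obtain ⟨t, ht⟩ := ker_knat r v hv
  have hxs : ∀ j : Fin (3^(r+1)), (x j : ℤ) = (s j : ℤ) + t * knat r j.val := by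
    intro j
    have h := ht j.val j.isLt
    simp only [hvdef, dif_pos j.isLt, Fin.eta] at h
    linarith
  have hbound : ∀ (c : ℤ), (∀ j : Fin (3^(r+1)), knat r j.val = c → 1 ≤ s j) →
      ((Finset.range (3^(r+1))).filter (fun n => knat r n = c)).card ≤ ∑ j, s j := by
    intro c hc
    calc ((Finset.range (3^(r+1))).filter (fun n => knat r n = c)).card
        = ∑ n ∈ Finset.range (3^(r+1)), (if knat r n = c then 1 else 0) :=
          Finset.card_filter _ _
      _ = ∑ j : Fin (3^(r+1)), (fun n => if knat r n = c then 1 else 0) j.val :=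
          (Fin.sum_univ_eq_sum_range _ _).symm
      _ ≤ ∑ j, s j := by
          apply Finset.sum_le_sum
          intro j _
          by_cases h : knat r j.val = c
          · simpa [h] using hc j h
          · simp [h]
  obtain ⟨hcB, hcA⟩ := card_filter_knat r
  rcases lt_trichotomy t 0 with hlt | heq | hgt
  · -- t < 0 : use positions where knat = 1
    exfalso
    have hb := hbound 1 (fun j hj => by
      have := hxs j
      rw [hj, mul_one] at this
      have hx0 : (0:ℤ) ≤ (x j : ℤ) := Int.natCast_nonneg _
      have : (1:ℤ) ≤ (s j : ℤ) := by linarith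
      exact_mod_cast this)
    omega
  · -- t = 0
    funext j
    have := hxs j
    rw [heq, zero_mul, add_zero] at this
    exact_mod_cast this
  · -- t > 0 : use positions where knat = -1
    exfalso
    have hb := hbound (-1) (fun j hj => by
      have := hxs j
      rw [hj] at this
      have hx0 : (0:ℤ) ≤ (x j : ℤ) := Int.natCast_nonneg _
      have : (1:ℤ) ≤ (s j : ℤ) := by linarith
      exact_mod_cast this)
    omega
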